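/- For each prime p there is a constant C > 0 such that for all sufficiently large n the following holds: there exist at least p^{(2/27)n³ − C n²} pairwise nonisomorphic commutative associative unital local rings R of cardinality p^n satisfying J(R) ≠ J(R)² and J(R)² ≠ 0 (i.e. J(R) ⊋ J(R)² ⊋ 0). -/

import Mathlib

namespace St18

variable (p a b : ℕ)

/-- symmetric "monomial" function -/
def B (v v' : Fin a → ZMod p) : Sym2 (Fin a) → ZMod p :=
  Sym2.lift ⟨fun i j => if i = j then v i * v' i else v i * v' j + v j * v' i, by
    intro i j
    rcases eq_or_ne i j with h | h
    · subst h; simp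
    · simp [h, h.symm]; ring⟩

variable {p a b}

lemma B_mk (v v' : Fin a → ZMod p) (i j : Fin a) :
    B p a v v' (s(i, j)) =
      if i = j then v i * v' i else v i * v' j + v j * v' i := rfl

lemma B_comm (v v' : Fin a → ZMod p) (z : Sym2 (Fin a)) :
    B p a v v' z = B p a v' v z := by
  induction z using Sym2.ind with
  | _ i j =>
    rw [B_mk, B_mk]
    rcases eq_or_ne i j with h | h
    · subst h; simp [mul_comm]
    · simp [h]; ring

lemma B_add_left (x y v' : Fin a → ZMod p) (z : Sym2 (Fin a)) :
    B p a (x + y) v' z = B p a x v' z + B p a y v' z := by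
  induction z using Sym2.ind with
  | _ i j =>
    rw [B_mk, B_mk, B_mk]
    rcases eq_or_ne i j with h | h
    · subst h; simp; ring
    · simp [h]; ring

lemma B_smul_left (c : ZMod p) (x v' : Fin a → ZMod p) (z : Sym2 (Fin a)) :
    B p a (c • x) v' z = c * B p a x v' z := by
  induction z using Sym2.ind with
  | _ i j =>
    rw [B_mk, B_mk]
    rcases eq_or_ne i j with h | h
    · subst h; simp; ring
    · simp [h]; ring

variable (p a b) in
/-- the bilinear form parametrized by `d` -/
def q (d : Fin b → Sym2 (Fin a) → ZMod p) (v v' : Fin a → ZMod p) (k : Fin b) : ZMod p :=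
  ∑ z : Sym2 (Fin a), d k z * B p a v v' z

lemma q_comm (d : Fin b → Sym2 (Fin a) → ZMod p) (v v' : Fin a → ZMod p) (k : Fin b) :
    q p a b d v v' k = q p a b d v' v k := by
  unfold q; exact Finset.sum_congr rfl fun z _ => by rw [B_comm]

lemma q_add_left (d : Fin b → Sym2 (Fin a) → ZMod p) (x y v' : Fin a → ZMod p) (k : Fin b) :
    q p a b d (x + y) v' k = q p a b d x v' k + q p a b d y v' k := by
  unfold q; rw [← Finset.sum_add_distrib]
  exact Finset.sum_congr rfl fun z _ => by rw [B_add_left]; ring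

lemma q_smul_left (d : Fin b → Sym2 (Fin a) → ZMod p) (c : ZMod p) (x v' : Fin a → ZMod p)
    (k : Fin b) : q p a b d (c • x) v' k = c * q p a b d x v' k := by
  unfold q; rw [Finset.mul_sum]
  exact Finset.sum_congr rfl fun z _ => by rw [B_smul_left]; ring

lemma q_add_right (d : Fin b → Sym2 (Fin a) → ZMod p) (x y v' : Fin a → ZMod p) (k : Fin b) :
    q p a b d v' (x + y) k = q p a b d v' x k + q p a b d v' y k := by
  rw [q_comm, q_add_left, q_comm d x, q_comm d y]

lemma q_smul_right (d : Fin b → Sym2 (Fin a) → ZMod p) (c : ZMod p) (x v' : Fin a → ZMod p)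
    (k : Fin b) : q p a b d v' (c • x) k = c * q p a b d v' x k := by
  rw [q_comm, q_smul_left, q_comm]

@[ext]
structure Rg (p a b : ℕ) (d : Fin b → Sym2 (Fin a) → ZMod p) where
  c : ZMod p
  v : Fin a → ZMod p
  w : Fin b → ZMod p

namespace Rg

variable {d : Fin b → Sym2 (Fin a) → ZMod p}


instance : Add (Rg p a b d) := ⟨fun x y => ⟨x.c + y.c, x.v + y.v, x.w + y.w⟩⟩
instance : Zero (Rg p a b d) := ⟨⟨0, 0, 0⟩⟩
instance : Neg (Rg p a b d) := ⟨fun x => ⟨-x.c, -x.v, -x.w⟩⟩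
instance : One (Rg p a b d) := ⟨⟨1, 0, 0⟩⟩
instance : Mul (Rg p a b d) := ⟨fun x y => ⟨x.c * y.c, x.c • y.v + y.c • x.v,
    x.c • y.w + y.c • x.w + fun k => q p a b d x.v y.v k⟩⟩

@[simp] lemma add_c (x y : Rg p a b d) : (x + y).c = x.c + y.c := rfl
@[simp] lemma add_v (x y : Rg p a b d) : (x + y).v = x.v + y.v := rfl
@[simp] lemma add_w (x y : Rg p a b d) : (x + y).w = x.w + y.w := rfl
@[simp] lemma zero_c : (0 : Rg p a b d).c = 0 := rfl
@[simp] lemma zero_v : (0 : Rg p a b d).v = 0 := rfl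
@[simp] lemma zero_w : (0 : Rg p a b d).w = 0 := rfl
@[simp] lemma neg_c (x : Rg p a b d) : (-x).c = -x.c := rfl
@[simp] lemma neg_v (x : Rg p a b d) : (-x).v = -x.v := rfl
@[simp] lemma neg_w (x : Rg p a b d) : (-x).w = -x.w := rfl
@[simp] lemma one_c : (1 : Rg p a b d).c = 1 := rfl
@[simp] lemma one_v : (1 : Rg p a b d).v = 0 := rfl
@[simp] lemma one_w : (1 : Rg p a b d).w = 0 := rfl
@[simp] lemma mul_c (x y : Rg p a b d) : (x * y).c = x.c * y.c := rfl
@[simp] lemma mul_v (x y : Rg p a b d) : (x * y).v = x.c • y.v + y.c • x.v := rfl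
@[simp] lemma mul_w (x y : Rg p a b d) : (x * y).w = x.c • y.w + y.c • x.w
    + fun k => q p a b d x.v y.v k := rfl

lemma q_zero_left (v' : Fin a → ZMod p) (k : Fin b) : q p a b d 0 v' k = 0 := by
  unfold q
  refine Finset.sum_eq_zero fun z _ => ?_
  induction z using Sym2.ind with
  | _ i j => rw [B_mk]; rcases eq_or_ne i j with h | h <;> simp [h]

lemma q_zero_right (v' : Fin a → ZMod p) (k : Fin b) : q p a b d v' 0 k = 0 := by
  rw [q_comm, q_zero_left]

set_option maxHeartbeats 1000000 in
instance : CommRing (Rg p a b d) where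
  add_assoc x y z := by ext <;> simp <;> ring
  zero_add x := by ext <;> simp
  add_zero x := by ext <;> simp
  add_comm x y := by ext <;> simp <;> ring
  neg_add_cancel x := by ext <;> simp
  nsmul n x := ⟨n • x.c, n • x.v, n • x.w⟩
  nsmul_zero x := Rg.ext (AddMonoid.nsmul_zero x.c) (AddMonoid.nsmul_zero x.v) (AddMonoid.nsmul_zero x.w)
  nsmul_succ n x := Rg.ext (AddMonoid.nsmul_succ n x.c) (AddMonoid.nsmul_succ n x.v) (AddMonoid.nsmul_succ n x.w)
  zsmul n x := ⟨n • x.c, n • x.v, n • x.w⟩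
  zsmul_zero' x := Rg.ext (SubNegMonoid.zsmul_zero' x.c) (SubNegMonoid.zsmul_zero' x.v) (SubNegMonoid.zsmul_zero' x.w)
  zsmul_succ' n x :=
    Rg.ext (SubNegMonoid.zsmul_succ' n x.c) (SubNegMonoid.zsmul_succ' n x.v) (SubNegMonoid.zsmul_succ' n x.w)
  zsmul_neg' n x :=
    Rg.ext (SubNegMonoid.zsmul_neg' n x.c) (SubNegMonoid.zsmul_neg' n x.v) (SubNegMonoid.zsmul_neg' n x.w)
  left_distrib x y z := by
    ext
    · simp; ring
    · simp [smul_add]; ring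
    · simp [q_add_right]; ring
  right_distrib x y z := by
    ext
    · simp; ring
    · simp [smul_add]; ring
    · simp [q_add_left]; ring
  zero_mul x := by
    ext
    · simp
    · simp
    · simp [q_zero_left]
  mul_zero x := by
    ext
    · simp
    · simp
    · simp [q_zero_right]
  mul_assoc x y z := by
    ext
    · simp; ring
    · simp; ring
    · simp [q_add_left, q_add_right, q_smul_left, q_smul_right]
      rw [q_comm d y.v z.v]
      ring
  one_mul x := by
    ext
    · simp
    · simp
    · simp [q_zero_left]
  mul_one x := by
    ext
    · simp
    · simp
    · simp [q_zero_right]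
  mul_comm x y := by
    ext
    · simp [mul_comm]
    · simp; ring
    · simp [q_comm d x.v y.v]; ring


variable [Fact p.Prime]

instance : Nontrivial (Rg p a b d) :=
  ⟨0, 1, fun h => by
    have := congrArg Rg.c h
    simp at this⟩

/-- the product type equiv -/
def prodEquiv : Rg p a b d ≃ ZMod p × (Fin a → ZMod p) × (Fin b → ZMod p) where
  toFun x := (x.c, x.v, x.w)
  invFun x := ⟨x.1, x.2.1, x.2.2⟩
  left_inv x := rfl
  right_inv x := rfl

instance : Fintype (Rg p a b d) := Fintype.ofEquiv _ (prodEquiv (d := d)).symm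

lemma card_Rg : Nat.card (Rg p a b d) = p ^ (1 + a + b) := by
  rw [Nat.card_congr (prodEquiv (d := d))]
  have : NeZero p := ⟨(Fact.out : p.Prime).ne_zero⟩
  simp [Nat.card_eq_fintype_card, ZMod.card]
  ring

lemma cube_eq_zero {x : Rg p a b d} (h : x.c = 0) : x ^ 3 = 0 := by
  have h2 : (x * x).v = 0 := by simp [h]
  have h2c : (x * x).c = 0 := by simp [h]
  have hxxx : x * x * x = 0 := by
    ext
    · simp [h]
    · simp [h, h2c]
    · simp [h, h2c, h2, q_zero_left]
  calc x ^ 3 = x * x * x := by ring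
    _ = 0 := hxxx

lemma isUnit_of_c_ne {x : Rg p a b d} (h : x.c ≠ 0) : IsUnit x := by
  set cst : Rg p a b d := ⟨x.c, 0, 0⟩ with hcst
  set y : Rg p a b d := ⟨x.c⁻¹, 0, 0⟩ with hy
  set e : Rg p a b d := x - cst with he
  have hec : e.c = 0 := by
    have : e.c = x.c - x.c := by
      have : e = x + (-cst) := by rw [he]; ring
      rw [this]; simp [hcst]
    simp [this]
  have he3 : e ^ 3 = 0 := cube_eq_zero hec
  have h1 : cst * y = 1 := by
    ext
    · simp [hcst, hy, mul_inv_cancel₀ h]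
    · simp [hcst, hy]
    · simp [hcst, hy, q_zero_left]
  have hx : x = cst + e := by rw [he]; ring
  refine IsUnit.of_mul_eq_one (y ^ 3 * (cst ^ 2 - cst * e + e ^ 2)) ?_
  rw [hx]
  linear_combination (y ^ 3) * he3 + ((cst * y) ^ 2 + cst * y + 1) * h1

lemma isUnit_iff {x : Rg p a b d} : IsUnit x ↔ x.c ≠ 0 := by
  constructor
  · intro hu hc
    have := (hu.pow 3)
    rw [cube_eq_zero hc] at this
    exact not_isUnit_zero this
  · exact isUnit_of_c_ne

instance : IsLocalRing (Rg p a b d) := by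
  refine IsLocalRing.of_isUnit_or_isUnit_one_sub_self fun x => ?_
  by_cases h : x.c = 0
  · right
    refine isUnit_of_c_ne ?_
    have hc1 : (1 - x).c = 1 - x.c := by
      rw [sub_eq_add_neg, sub_eq_add_neg]; simp
    rw [hc1, h, sub_zero]
    exact one_ne_zero
  · exact Or.inl (isUnit_of_c_ne h)

lemma mem_maximalIdeal_iff {x : Rg p a b d} :
    x ∈ IsLocalRing.maximalIdeal (Rg p a b d) ↔ x.c = 0 := by
  rw [IsLocalRing.mem_maximalIdeal, mem_nonunits_iff, isUnit_iff, not_not]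

lemma jacobson_bot :
    (⊥ : Ideal (Rg p a b d)).jacobson = IsLocalRing.maximalIdeal (Rg p a b d) :=
  IsLocalRing.jacobson_eq_maximalIdeal ⊥ bot_ne_top

/-- the ideal of elements with zero constant and v part -/
def K : Ideal (Rg p a b d) where
  carrier := {x | x.c = 0 ∧ x.v = 0}
  add_mem' := by
    rintro x y ⟨h1, h2⟩ ⟨h3, h4⟩
    constructor <;> simp [h1, h2, h3, h4]
  zero_mem' := by constructor <;> simp
  smul_mem' := by
    rintro r x ⟨h1, h2⟩
    constructor
    · show (r * x).c = 0; simp [h1]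
    · show (r * x).v = 0; simp [h1, h2]

lemma sq_maximalIdeal_le :
    IsLocalRing.maximalIdeal (Rg p a b d) ^ 2 ≤ K (d := d) := by
  rw [pow_two]
  refine Ideal.mul_le.mpr fun r hr s hs => ?_
  rw [mem_maximalIdeal_iff] at hr hs
  constructor
  · simp [hr, hs]
  · simp [hr, hs]

lemma sq_ne (ha : 0 < a) :
    (⊥ : Ideal (Rg p a b d)).jacobson ^ 2 ≠ (⊥ : Ideal (Rg p a b d)).jacobson := by
  rw [jacobson_bot]
  intro hEq
  set E : Rg p a b d := ⟨0, Pi.single ⟨0, ha⟩ 1, 0⟩ with hE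
  have hmem : E ∈ IsLocalRing.maximalIdeal (Rg p a b d) := mem_maximalIdeal_iff.mpr rfl
  rw [← hEq] at hmem
  have := (sq_maximalIdeal_le (d := d)) hmem
  have hv := this.2
  have := congrFun hv ⟨0, ha⟩
  simp [hE] at this

lemma B_single (i j : Fin a) (z : Sym2 (Fin a)) :
    B p a (Pi.single i (1 : ZMod p)) (Pi.single j 1) z =
      if z = s(i, j) then 1 else 0 := by
  induction z using Sym2.ind with
  | _ x y =>
    rw [B_mk]
    rcases eq_or_ne x y with rfl | hxy
    · simp only [Pi.single_apply, Sym2.mk_eq_mk_iff]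
      split_ifs <;> simp_all <;> aesop
    · simp only [Pi.single_apply, Sym2.mk_eq_mk_iff, hxy]
      split_ifs <;> simp_all <;> aesop

lemma q_single (i j : Fin a) (k : Fin b) :
    q p a b d (Pi.single i 1) (Pi.single j 1) k = d k (s(i, j)) := by
  unfold q
  rw [Finset.sum_congr rfl fun z _ => by rw [B_single]]
  simp [Finset.sum_ite_eq']

lemma sq_ne_bot {i j : Fin a} {k : Fin b} (hd : d k (s(i, j)) ≠ 0) :
    (⊥ : Ideal (Rg p a b d)).jacobson ^ 2 ≠ ⊥ := by
  rw [jacobson_bot]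
  intro hEq
  set Ei : Rg p a b d := ⟨0, Pi.single i 1, 0⟩ with hEi
  set Ej : Rg p a b d := ⟨0, Pi.single j 1, 0⟩ with hEj
  have hmem : Ei * Ej ∈ IsLocalRing.maximalIdeal (Rg p a b d) ^ 2 := by
    rw [pow_two]
    exact Ideal.mul_mem_mul (mem_maximalIdeal_iff.mpr rfl) (mem_maximalIdeal_iff.mpr rfl)
  rw [hEq] at hmem
  rw [Ideal.mem_bot] at hmem
  have := congrArg Rg.w hmem
  have := congrFun this k
  simp [hEi, hEj, q_single] at this
  exact hd this


section Counting

variable [Fact p.Prime]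

def cHom : Rg p a b d →+ ZMod p where
  toFun := Rg.c
  map_zero' := rfl
  map_add' _ _ := rfl

def bOne : Rg p a b d := ⟨1, 0, 0⟩
def bV (i : Fin a) : Rg p a b d := ⟨0, Pi.single i 1, 0⟩
def bW (k : Fin b) : Rg p a b d := ⟨0, 0, Pi.single k 1⟩

@[simp] lemma nsmul_c (n : ℕ) (x : Rg p a b d) : (n • x).c = n • x.c := rfl
@[simp] lemma nsmul_v (n : ℕ) (x : Rg p a b d) : (n • x).v = n • x.v := rfl
@[simp] lemma nsmul_w (n : ℕ) (x : Rg p a b d) : (n • x).w = n • x.w := rfl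

@[simp] lemma sum_c {ι : Type*} (s : Finset ι) (f : ι → Rg p a b d) :
    (∑ i ∈ s, f i).c = ∑ i ∈ s, (f i).c := map_sum (cHom (d := d)) f s

lemma sum_v {ι : Type*} (s : Finset ι) (f : ι → Rg p a b d) :
    (∑ i ∈ s, f i).v = ∑ i ∈ s, (f i).v := by
  classical
  induction s using Finset.induction with
  | empty => simp
  | insert _ _ h ih => simp [Finset.sum_insert h, ih]

lemma sum_w {ι : Type*} (s : Finset ι) (f : ι → Rg p a b d) :
    (∑ i ∈ s, f i).w = ∑ i ∈ s, (f i).w := by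
  classical
  induction s using Finset.induction with
  | empty => simp
  | insert _ _ h ih => simp [Finset.sum_insert h, ih]

lemma decomp (x : Rg p a b d) :
    x = (x.c.val) • bOne + (∑ i, (x.v i).val • bV i) + (∑ k, (x.w k).val • bW k) := by
  have : NeZero p := ⟨(Fact.out : p.Prime).ne_zero⟩
  ext
  · simp only [add_c, sum_c, nsmul_c, bOne, bV, bW]
    simp only [smul_zero, Finset.sum_const_zero, add_zero, nsmul_eq_mul, mul_one]
    rw [ZMod.natCast_val, ZMod.cast_id]
  · simp only [add_v, sum_v, nsmul_v, bOne, bV, bW]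
    simp only [Pi.add_apply, Finset.sum_apply, Pi.smul_apply, smul_zero,
      Pi.zero_apply, Finset.sum_const_zero, zero_add, add_zero]
    simp only [Pi.single_apply, smul_ite, smul_zero]
    simp only [Finset.sum_ite_eq, Finset.mem_univ, if_true]
    rw [nsmul_eq_mul, mul_one, ZMod.natCast_val, ZMod.cast_id]
  · simp only [add_w, sum_w, nsmul_w, bOne, bV, bW]
    simp only [Pi.add_apply, Finset.sum_apply, Pi.smul_apply, smul_zero,
      Pi.zero_apply, Finset.sum_const_zero, zero_add, add_zero]
    simp only [Pi.single_apply, smul_ite, smul_zero]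
    simp only [Finset.sum_ite_eq, Finset.mem_univ, if_true]
    rw [nsmul_eq_mul, mul_one, ZMod.natCast_val, ZMod.cast_id]

lemma addHom_ext_basis {M : Type*} [AddCommMonoid M] (f g : Rg p a b d →+ M)
    (h1 : f bOne = g bOne) (hv : ∀ i, f (bV i) = g (bV i))
    (hw : ∀ k, f (bW k) = g (bW k)) : f = g := by
  ext x
  rw [decomp x]
  simp only [map_add, map_sum, map_nsmul, h1, hv, hw]

variable (p a b) in
/-- transport between two parameter choices; an additive equivalence -/
def transport (d₁ d₂ : Fin b → Sym2 (Fin a) → ZMod p) :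
    Rg p a b d₁ ≃+ Rg p a b d₂ where
  toFun x := ⟨x.c, x.v, x.w⟩
  invFun x := ⟨x.c, x.v, x.w⟩
  left_inv x := rfl
  right_inv x := rfl
  map_add' x y := rfl

variable (p a b) in
def gE {d₀ d : Fin b → Sym2 (Fin a) → ZMod p} (f : Rg p a b d₀ ≃+* Rg p a b d) :
    Rg p a b d₀ ≃+ Rg p a b d₀ :=
  f.toAddEquiv.trans (transport p a b d d₀)

lemma mul_bV_w (d : Fin b → Sym2 (Fin a) → ZMod p) (i j : Fin a) (k : Fin b) :
    (((⟨0, Pi.single i 1, 0⟩ : Rg p a b d)) * ⟨0, Pi.single j 1, 0⟩).w k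
      = d k (s(i, j)) := by
  simp [q_single]

lemma recover {d₀ d : Fin b → Sym2 (Fin a) → ZMod p} (f : Rg p a b d₀ ≃+* Rg p a b d)
    (i j : Fin a) (k : Fin b) :
    d k (s(i, j)) =
      ((gE p a b f) (((gE p a b f).symm (bV i)) * ((gE p a b f).symm (bV j)))).w k := by
  have key : ∀ x : Rg p a b d₀, f ((gE p a b f).symm x) = transport p a b d₀ d x := by
    intro x
    show f (f.symm _) = _
    rw [RingEquiv.apply_symm_apply]
    rfl
  have h1 : d k (s(i, j)) =
      ((transport p a b d₀ d (bV i)) * (transport p a b d₀ d (bV j))).w k :=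
    (mul_bV_w d i j k).symm
  rw [h1, ← key, ← key, ← map_mul]
  rfl

lemma fiber_injective (d₀ : Fin b → Sym2 (Fin a) → ZMod p) :
    Function.Injective
      (fun dd : {e : Fin b → Sym2 (Fin a) → ZMod p //
          Nonempty (Rg p a b d₀ ≃+* Rg p a b e)} =>
        (fun t : Option (Fin a ⊕ Fin b) =>
          (gE p a b (Classical.choice dd.2))
            (t.elim bOne (Sum.elim (bV (d := d₀)) (bW (d := d₀)))))) := by
  rintro ⟨d₁, h₁⟩ ⟨d₂, h₂⟩ h
  set f₁ := Classical.choice h₁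
  set f₂ := Classical.choice h₂
  have hg : gE p a b f₁ = gE p a b f₂ := by
    have hh : (gE p a b f₁).toAddMonoidHom = (gE p a b f₂).toAddMonoidHom := by
      apply addHom_ext_basis
      · exact congrFun h none
      · exact fun i => congrFun h (some (Sum.inl i))
      · exact fun k => congrFun h (some (Sum.inr k))
    refine AddEquiv.ext fun x => ?_
    exact congrArg (fun (φ : Rg p a b d₀ →+ Rg p a b d₀) => φ x) hh
  have : d₁ = d₂ := by
    funext k z
    induction z using Sym2.ind with
    | _ i j => rw [recover f₁ i j k, recover f₂ i j k, hg]
  exact Subtype.ext this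

end Counting

end Rg


section Assembly

variable (p a b : ℕ) [Fact p.Prime]

abbrev Dall := Fin b → Sym2 (Fin a) → ZMod p

abbrev Dnz := {e : Dall p a b // e ≠ 0}

def isoSetoid : Setoid (Dnz p a b) where
  r d₁ d₂ := Nonempty (Rg p a b d₁.1 ≃+* Rg p a b d₂.1)
  iseqv := by
    refine ⟨fun d => ⟨RingEquiv.refl _⟩, ?_, ?_⟩
    · rintro _ _ ⟨e⟩; exact ⟨e.symm⟩
    · rintro _ _ _ ⟨e⟩ ⟨f⟩; exact ⟨e.trans f⟩

instance : NeZero p := ⟨(Fact.out : p.Prime).ne_zero⟩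

lemma card_Dall : Fintype.card (Dall p a b) = p ^ (b * ((a + 1).choose 2)) := by
  rw [Fintype.card_fun, Fintype.card_fun, ZMod.card, Sym2.card, Fintype.card_fin,
    Fintype.card_fin, ← pow_mul, mul_comm (Nat.choose (a + 1) 2) b]

lemma card_Dnz : Fintype.card (Dnz p a b) = p ^ (b * ((a + 1).choose 2)) - 1 := by
  classical
  have h1 : Fintype.card (Dnz p a b) =
      Fintype.card (Dall p a b) - Fintype.card {e : Dall p a b // e = 0} :=
    Fintype.card_subtype_compl _
  rw [h1, Fintype.card_subtype_eq (0 : Dall p a b), card_Dall]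

lemma card_fintype_Rg (d : Dall p a b) :
    Fintype.card (Rg p a b d) = p ^ (1 + a + b) := by
  rw [← Nat.card_eq_fintype_card, Rg.card_Rg]

lemma fiber_bound (d₀ : Dnz p a b)
    [DecidablePred (fun x : Dnz p a b => Quotient.mk (isoSetoid p a b) x
      = Quotient.mk (isoSetoid p a b) d₀)] :
    (Finset.univ.filter
        (fun x : Dnz p a b => Quotient.mk (isoSetoid p a b) x
          = Quotient.mk (isoSetoid p a b) d₀)).card
      ≤ p ^ ((1 + a + b) * (1 + a + b)) := by
  classical
  have hcardT : Fintype.card (Option (Fin a ⊕ Fin b) → Rg p a b d₀.1)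
      = p ^ ((1 + a + b) * (1 + a + b)) := by
    rw [Fintype.card_fun, card_fintype_Rg, Fintype.card_option,
      Fintype.card_sum, Fintype.card_fin, Fintype.card_fin, ← pow_mul]
    congr 1
    ring
  set G : Dnz p a b → (Option (Fin a ⊕ Fin b) → Rg p a b d₀.1) := fun x =>
    if h : Nonempty (Rg p a b d₀.1 ≃+* Rg p a b x.1) then
      (fun t : Option (Fin a ⊕ Fin b) =>
        (Rg.gE p a b (Classical.choice h))
          (t.elim Rg.bOne (Sum.elim (Rg.bV (d := d₀.1)) (Rg.bW (d := d₀.1)))))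
    else 0 with hG
  have := Finset.card_le_card_of_injOn
    (s := Finset.univ.filter (fun x : Dnz p a b => Quotient.mk (isoSetoid p a b) x
      = Quotient.mk (isoSetoid p a b) d₀)) (t := Finset.univ)
    G (fun x _ => Finset.mem_univ (G x)) ?_
  · calc _ ≤ Finset.univ.card := this
      _ = Fintype.card (Option (Fin a ⊕ Fin b) → Rg p a b d₀.1) := rfl
      _ = _ := hcardT
  · intro x hx y hy hxy
    simp only [Finset.mem_coe, Finset.mem_filter] at hx hy
    have hx' : Nonempty (Rg p a b d₀.1 ≃+* Rg p a b x.1) := by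
      obtain ⟨e⟩ := Quotient.exact hx.2
      exact ⟨e.symm⟩
    have hy' : Nonempty (Rg p a b d₀.1 ≃+* Rg p a b y.1) := by
      obtain ⟨e⟩ := Quotient.exact hy.2
      exact ⟨e.symm⟩
    have hGx : G x = (fun t : Option (Fin a ⊕ Fin b) =>
        (Rg.gE p a b (Classical.choice hx'))
          (t.elim Rg.bOne (Sum.elim (Rg.bV (d := d₀.1)) (Rg.bW (d := d₀.1))))) := by
      rw [hG]; exact dif_pos hx'
    have hGy : G y = (fun t : Option (Fin a ⊕ Fin b) =>
        (Rg.gE p a b (Classical.choice hy'))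
          (t.elim Rg.bOne (Sum.elim (Rg.bV (d := d₀.1)) (Rg.bW (d := d₀.1))))) := by
      rw [hG]; exact dif_pos hy'
    have harg : (fun t : Option (Fin a ⊕ Fin b) =>
        (Rg.gE p a b (Classical.choice hx'))
          (t.elim Rg.bOne (Sum.elim (Rg.bV (d := d₀.1)) (Rg.bW (d := d₀.1)))))
        = (fun t : Option (Fin a ⊕ Fin b) =>
        (Rg.gE p a b (Classical.choice hy'))
          (t.elim Rg.bOne (Sum.elim (Rg.bV (d := d₀.1)) (Rg.bW (d := d₀.1))))) := by
      rw [← hGx, ← hGy]; exact hxy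
    have key := Rg.fiber_injective (p := p) (a := a) (b := b) d₀.1
      (a₁ := ⟨x.1, hx'⟩) (a₂ := ⟨y.1, hy'⟩) harg
    have hv : x.1 = y.1 := congrArg
      (fun z : {e : Dall p a b // Nonempty (Rg p a b d₀.1 ≃+* Rg p a b e)} => z.1) key
    exact Subtype.ext hv

lemma many_classes (M : ℕ)
    (hM : p ^ M * p ^ ((1 + a + b) * (1 + a + b))
      ≤ p ^ (b * ((a + 1).choose 2)) - 1) :
    p ^ M ≤ Nat.card (Quotient (isoSetoid p a b)) := by
  classical
  letI : Fintype (Quotient (isoSetoid p a b)) := Fintype.ofFinite _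
  have key : Fintype.card (Dnz p a b)
      ≤ p ^ ((1 + a + b) * (1 + a + b)) * Fintype.card (Quotient (isoSetoid p a b)) := by
    calc Fintype.card (Dnz p a b)
        = Finset.univ.card := rfl
      _ ≤ p ^ ((1 + a + b) * (1 + a + b)) *
            (Finset.univ.image (Quotient.mk (isoSetoid p a b))).card := by
          refine Finset.card_le_mul_card_image _ _ ?_
          intro c hc
          obtain ⟨d₀, _, rfl⟩ := Finset.mem_image.mp hc
          exact fiber_bound p a b d₀
      _ ≤ _ := by
          exact Nat.mul_le_mul_left _ (Finset.card_le_univ _)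
  rw [card_Dnz] at key
  have h2 : p ^ M * p ^ ((1 + a + b) * (1 + a + b))
      ≤ Fintype.card (Quotient (isoSetoid p a b)) * p ^ ((1 + a + b) * (1 + a + b)) := by
    calc p ^ M * p ^ ((1 + a + b) * (1 + a + b)) ≤ _ := hM
      _ ≤ _ := by
          rw [mul_comm (p ^ ((1 + a + b) * (1 + a + b)))] at key
          exact key
  have := Nat.le_of_mul_le_mul_right h2 (pow_pos (Fact.out : p.Prime).pos _)
  rwa [Nat.card_eq_fintype_card]

lemma main_existence (ha : 0 < a) (M : ℕ)
    (hM : p ^ M * p ^ ((1 + a + b) * (1 + a + b))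
      ≤ p ^ (b * ((a + 1).choose 2)) - 1) :
    ∃ Rs : Fin (p ^ M) → CommRingCat.{0},
      (∀ i, Nat.card (Rs i) = p ^ (1 + a + b)) ∧
      (∀ i, IsLocalRing (Rs i)) ∧
      (∀ i, (⊥ : Ideal (Rs i)).jacobson ^ 2 ≠ (⊥ : Ideal (Rs i)).jacobson) ∧
      (∀ i, (⊥ : Ideal (Rs i)).jacobson ^ 2 ≠ ⊥) ∧
      (∀ i j, i ≠ j → ¬ Nonempty ((Rs i) ≃+* (Rs j))) := by
  classical
  letI : Fintype (Quotient (isoSetoid p a b)) := Fintype.ofFinite _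
  have hcard : p ^ M ≤ Fintype.card (Quotient (isoSetoid p a b)) := by
    rw [← Nat.card_eq_fintype_card]
    exact many_classes p a b M hM
  set eQ := Fintype.equivFin (Quotient (isoSetoid p a b)) with heQ
  set rep : Fin (p ^ M) → Dnz p a b :=
    fun i => (eQ.symm (Fin.castLE hcard i)).out with hrep
  have hrepclass : ∀ i, Quotient.mk (isoSetoid p a b) (rep i)
      = eQ.symm (Fin.castLE hcard i) := fun i => Quotient.out_eq _
  refine ⟨fun i => CommRingCat.of (Rg p a b (rep i).1), ?_, ?_, ?_, ?_, ?_⟩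
  · intro i
    exact Rg.card_Rg
  · intro i
    exact inferInstanceAs (IsLocalRing (Rg p a b (rep i).1))
  · intro i
    exact Rg.sq_ne ha
  · intro i
    have hne : (rep i).1 ≠ 0 := (rep i).2
    have : ∃ k z, (rep i).1 k z ≠ 0 := by
      by_contra h
      push_neg at h
      exact hne (funext fun k => funext fun z => h k z)
    obtain ⟨k, z, hz⟩ := this
    revert hz
    induction z using Sym2.ind with
    | _ x y =>
      intro hz
      exact Rg.sq_ne_bot hz
  · intro i j hij ⟨e⟩
    apply hij
    have hcl : Quotient.mk (isoSetoid p a b) (rep i) = Quotient.mk (isoSetoid p a b) (rep j) :=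
      Quotient.sound ⟨e⟩
    rw [hrepclass, hrepclass] at hcl
    have := eQ.symm.injective hcl
    exact Fin.castLE_injective hcard this

end Assembly

end St18

/-- For every prime `p` there is `C > 0` such that for all large `n` there are at least
`p^(2n³/27 − Cn²)` pairwise nonisomorphic commutative local rings of order `p^n` with
`J(R) ⊋ J(R)² ⊋ 0`. -/
theorem statement18 (p : ℕ) (hp : p.Prime) :
    ∃ C : ℕ, 0 < C ∧ ∃ N : ℕ, ∀ n : ℕ, N ≤ n →
      ∃ Rs : Fin (p ^ (2 * n ^ 3 / 27 - C * n ^ 2)) → CommRingCat.{0},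
        (∀ i, Nat.card (Rs i) = p ^ n) ∧
        (∀ i, IsLocalRing (Rs i)) ∧
        (∀ i, (⊥ : Ideal (Rs i)).jacobson ^ 2 ≠ (⊥ : Ideal (Rs i)).jacobson) ∧
        (∀ i, (⊥ : Ideal (Rs i)).jacobson ^ 2 ≠ ⊥) ∧
        (∀ i j, i ≠ j → ¬ Nonempty ((Rs i) ≃+* (Rs j))) := by
  haveI : Fact p.Prime := ⟨hp⟩
  refine ⟨20, by norm_num, 100, fun n hn => ?_⟩
  set m := n / 3 with hm
  set a := 2 * m with haa
  set b := n - 1 - 2 * m with hbb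
  have hab : 1 + a + b = n := by omega
  have ha : 0 < a := by omega
  have hmb : m ≤ b + 1 := by omega
  have h4 : 33 ≤ m := by omega
  have h1n : 3 * m ≤ n := by omega
  have h2n : n ≤ 3 * m + 2 := by omega
  set K := b * (m * (2 * m + 1)) with hK
  have hch : (a + 1).choose 2 = m * (2 * m + 1) := by
    rw [Nat.choose_two_right]
    have h5 : (a + 1) * (a + 1 - 1) = 2 * (m * (2 * m + 1)) := by
      rw [Nat.add_sub_cancel, haa]; ring
    rw [h5, Nat.mul_div_cancel_left _ (by norm_num : 0 < 2)]
  have hbK : m * (m * (2 * m + 1)) ≤ (b + 1) * (m * (2 * m + 1)) :=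
    Nat.mul_le_mul_right _ hmb
  have hn3 : n ^ 3 ≤ (3 * m + 2) ^ 3 := Nat.pow_le_pow_left h2n 3
  have hnn : (3 * m) ^ 2 ≤ n ^ 2 := Nat.pow_le_pow_left h1n 2
  have hn2 : n ^ 2 ≤ (3 * m + 2) ^ 2 := Nat.pow_le_pow_left h2n 2
  have e1 : (3 * m + 2) ^ 3 = 27 * m ^ 3 + 54 * m ^ 2 + 36 * m + 8 := by ring
  have e2 : (3 * m) ^ 2 = 9 * m ^ 2 := by ring
  have e3 : 33 * m ≤ m ^ 2 := by
    calc 33 * m ≤ m * m := Nat.mul_le_mul_right m h4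
      _ = m ^ 2 := (sq m).symm
  have e4 : 33 * m ^ 2 ≤ m ^ 3 := by
    calc 33 * m ^ 2 ≤ m * m ^ 2 := Nat.mul_le_mul_right (m ^ 2) h4
      _ = m ^ 3 := by ring
  have hexp : (b + 1) * (m * (2 * m + 1)) = K + (2 * m ^ 2 + m) := by rw [hK]; ring
  have hmm : m * (m * (2 * m + 1)) = 2 * m ^ 3 + m ^ 2 := by ring
  have e6 : (3 * m + 2) ^ 2 = 9 * m ^ 2 + 12 * m + 4 := by ring
  have hbig : 2 * n ^ 3 ≤ 27 * (K + 18 * n ^ 2) + 26 := by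
    linarith [hn3, hnn, hbK, e1, e2, e3, hexp, hmm]
  have hdiv : 2 * n ^ 3 / 27 ≤ K + 18 * n ^ 2 :=
    (Nat.div_le_iff_le_mul_add_pred (by norm_num)).mpr (by linarith [hbig])
  have hlow : 2 * n ^ 2 + 1 ≤ K := by
    linarith [hn2, hbK, e3, e4, e6, hexp, hmm]
  set E := b * ((a + 1).choose 2) with hE
  have hEK : E = K := by rw [hE, hch, hK]
  set M := 2 * n ^ 3 / 27 - 20 * n ^ 2 with hM
  have hEbig : M + (1 + a + b) * (1 + a + b) + 1 ≤ E := by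
    rw [hEK, hab, hM]
    have hnnn : n * n = n ^ 2 := (sq n).symm
    rw [hnnn]
    generalize hgs : n ^ 2 = s at hdiv hlow ⊢
    generalize hgX : 2 * n ^ 3 / 27 = X at hdiv ⊢
    omega
  have hp2 : 2 ≤ p := hp.two_le
  have hE1 : 1 ≤ E := by omega
  have hMle : M + (1 + a + b) * (1 + a + b) ≤ E - 1 := by omega
  have hMain : p ^ M * p ^ ((1 + a + b) * (1 + a + b)) ≤ p ^ E - 1 := by
    rw [← pow_add]
    calc p ^ (M + (1 + a + b) * (1 + a + b)) ≤ p ^ (E - 1) :=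
          Nat.pow_le_pow_right (by omega) hMle
      _ ≤ p ^ E - 1 := by
          have h6 : p ^ (E - 1) * 2 ≤ p ^ (E - 1) * p := Nat.mul_le_mul_left _ hp2
          have h7 : p ^ (E - 1) * p = p ^ E := by
            rw [← pow_succ]
            congr 1
            omega
          have h8 : 1 ≤ p ^ (E - 1) := Nat.one_le_pow _ _ (by omega)
          omega
  obtain ⟨Rs, hc, hl, hj1, hj2, hni⟩ := St18.main_existence p a b ha M hMain
  rw [hab] at hc
  exact ⟨Rs, hc, hl, hj1, hj2, hni⟩
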